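/- Let $x$ be a real random variable with finite second moment, let $r \le t$ be reals, and suppose $p^*:\mathbb{R}\to[0,1]$ is nondecreasing with $p^*(x)=1$ for almost all $x>t$ and $p^*(x)=\ell$ (a constant) for almost all $x<t$, where $\mathbb{E}((x-r)(x-t)\mathbf{1}(x<t))=0$. Then for every nondecreasing $q:\mathbb{R}\to[0,1]$, $\mathbb{E}(p^*(x)(x-r)(x-t)) \ge \mathbb{E}(q(x)(x-r)(x-t))$. -/

import Mathlib

open MeasureTheory Set

/-- Sufficiency (method of undetermined multipliers): the two-level
monotone design maximizes `E(q(x)(x-r)(x-t))` over monotone designs `q`. -/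
theorem stmt9 (μ : Measure ℝ) [IsProbabilityMeasure μ]
    (hint2 : Integrable (fun x : ℝ => x^2) μ)
    (r t : ℝ) (hrt : r ≤ t) (l : ℝ)
    (pstar : ℝ → ℝ) (hmono : Monotone pstar) (h01 : ∀ x, pstar x ∈ Icc (0:ℝ) 1)
    (hup : ∀ᵐ x ∂μ, t < x → pstar x = 1)
    (hlow : ∀ᵐ x ∂μ, x < t → pstar x = l)
    (hroot : ∫ x in Iio t, (x - r) * (x - t) ∂μ = 0) :
    ∀ q : ℝ → ℝ, Monotone q → (∀ x, q x ∈ Icc (0:ℝ) 1) →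
      ∫ x, q x * ((x - r) * (x - t)) ∂μ ≤ ∫ x, pstar x * ((x - r) * (x - t)) ∂μ := by
  intro q hqmono hq01
  set f : ℝ → ℝ := fun x => (x - r) * (x - t) with hfdef
  have hx_int : Integrable (fun x : ℝ => x) μ := by
    refine Integrable.mono ((integrable_const (1:ℝ)).add hint2)
      measurable_id.aestronglyMeasurable ?_
    filter_upwards with x
    simp only [Real.norm_eq_abs, id]
    have h1 : |x| ≤ 1 + x ^ 2 := by nlinarith [abs_nonneg x, sq_abs x, sq_nonneg (|x| - 1)]
    calc |x| ≤ 1 + x ^ 2 := h1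
      _ ≤ |1 + x ^ 2| := le_abs_self _
  have hf_int : Integrable f μ := by
    have hfe : f = fun x => x ^ 2 - (r + t) * x + r * t := by funext x; simp [hfdef]; ring
    rw [hfe]
    exact (hint2.sub (hx_int.const_mul (r + t))).add (integrable_const _)
  have hbdd_mul : ∀ g : ℝ → ℝ, Monotone g → (∀ x, g x ∈ Icc (0:ℝ) 1) →
      Integrable (fun x => g x * f x) μ := by
    intro g hg hg01
    exact hf_int.bdd_mul hg.measurable.aestronglyMeasurable
      (c := 1) (Filter.Eventually.of_forall fun x => abs_le.mpr ⟨by linarith [(hg01 x).1], (hg01 x).2⟩)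
  have hp_int := hbdd_mul pstar hmono h01
  have hq_int := hbdd_mul q hqmono hq01
  have hd_int : Integrable (fun x => (pstar x - q x) * f x) μ := by
    have he : (fun x => (pstar x - q x) * f x) = fun x => pstar x * f x - q x * f x := by
      funext x; ring
    rw [he]; exact hp_int.sub hq_int
  -- Integral over Ioi t is nonnegative
  have hIoi : 0 ≤ ∫ x in Ioi t, (pstar x - q x) * f x ∂μ := by
    apply setIntegral_nonneg_of_ae_restrict
    filter_upwards [ae_restrict_mem measurableSet_Ioi, ae_restrict_of_ae hup] with x hx h1
    rw [h1 hx]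
    have hfx : 0 ≤ f x := mul_nonneg (by simp only [mem_Ioi] at hx; linarith)
      (by simp only [mem_Ioi] at hx; linarith)
    exact mul_nonneg (by linarith [(hq01 x).2]) hfx
  -- Integral over Iic t is nonnegative
  have hIic : 0 ≤ ∫ x in Iic t, (pstar x - q x) * f x ∂μ := by
    set c := q r with hc
    have e1 : ∫ x in Iic t, (pstar x - q x) * f x ∂μ = ∫ x in Iic t, (l - q x) * f x ∂μ := by
      apply integral_congr_ae
      filter_upwards [ae_restrict_mem measurableSet_Iic, ae_restrict_of_ae hlow] with x hx hl
      rcases lt_or_eq_of_le (show x ≤ t from hx) with h | h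
      · rw [hl h]
      · have hfx : f x = 0 := by simp [hfdef, h]
        rw [hfx, mul_zero, mul_zero]
    have hIicf : ∫ x in Iic t, f x ∂μ = 0 := by
      have hu : Iic t = Iio t ∪ {t} := by ext x; simp [le_iff_lt_or_eq]
      have hdisj : Disjoint (Iio t) ({t} : Set ℝ) := by
        simp [disjoint_singleton_right]
      rw [hu, setIntegral_union hdisj (measurableSet_singleton t)
        hf_int.integrableOn hf_int.integrableOn, hroot]
      rw [integral_singleton]
      have : f t = 0 := by simp [hfdef]
      simp [this]
    have e2 : ∫ x in Iic t, (l - q x) * f x ∂μ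
        = (l - c) * ∫ x in Iic t, f x ∂μ + ∫ x in Iic t, (c - q x) * f x ∂μ := by
      rw [← integral_const_mul]
      rw [← integral_add ((hf_int.const_mul (l - c)).integrableOn)]
      · apply integral_congr_ae
        filter_upwards with x
        ring
      · have he : (fun x => (c - q x) * f x) = fun x => c * f x - q x * f x := by
          funext x; ring
        rw [he]
        exact ((hf_int.const_mul c).sub hq_int).integrableOn
    have e3 : 0 ≤ ∫ x in Iic t, (c - q x) * f x ∂μ := by
      apply setIntegral_nonneg measurableSet_Iic
      intro x hx
      simp only [mem_Iic] at hx
      rcases le_total x r with h | h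
      · have h1 : q x ≤ c := hqmono h
        have h2 : 0 ≤ f x := mul_nonneg_iff.mpr (Or.inr ⟨by linarith, by linarith⟩)
        exact mul_nonneg (by linarith) h2
      · have h1 : c ≤ q x := hqmono h
        have h2 : f x ≤ 0 := mul_nonpos_iff.mpr (Or.inl ⟨by linarith, by linarith⟩)
        exact mul_nonneg_iff.mpr (Or.inr ⟨by linarith, h2⟩)
    rw [e1, e2, hIicf, mul_zero, zero_add]
    exact e3
  have key : 0 ≤ ∫ x, (pstar x - q x) * f x ∂μ := by
    rw [← intervalIntegral.integral_Iic_add_Ioi hd_int.integrableOn hd_int.integrableOn]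
    linarith
  have split : ∫ x, (pstar x - q x) * f x ∂μ
      = (∫ x, pstar x * f x ∂μ) - ∫ x, q x * f x ∂μ := by
    rw [← integral_sub hp_int hq_int]
    apply integral_congr_ae
    filter_upwards with x
    ring
  rw [split] at key
  linarith
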